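/- Let X(μ) be an order continuous Banach function space with the Daugavet property. Then the identity map on X(μ), i.e., the integration map of the vector measure A ↦ χ_A, cannot be written as a (possibly uncountable) pointwise unconditionally convergent series of finite rank operators. -/

import Mathlib

open Metric MeasureTheory


/-- The Daugavet property: `‖Id + T‖ = 1 + ‖T‖` for every rank-one operator `T`. -/
def DaugavetProperty (X : Type*) [NormedAddCommGroup X] [NormedSpace ℝ X] : Prop :=
  ∀ (φ : X →L[ℝ] ℝ) (y : X),
    ‖ContinuousLinearMap.id ℝ X + φ.smulRight y‖ = 1 + ‖φ.smulRight y‖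

section Aux
variable {X : Type*} [NormedAddCommGroup X] [NormedSpace ℝ X]

theorem dp_norm_id (hX : DaugavetProperty X) : ‖ContinuousLinearMap.id ℝ X‖ = 1 := by
  have h := hX 0 0
  have h0 : (0 : X →L[ℝ] ℝ).smulRight (0 : X) = 0 := by ext x; simp
  rw [h0] at h
  simpa using h

/-- The slice lemma: from the Daugavet property. -/
theorem dp_slice (hX : DaugavetProperty X) (φ : X →L[ℝ] ℝ) (hφ : ‖φ‖ = 1) (x : X)
    (hx : ‖x‖ = 1) {ε : ℝ} (hε : 0 < ε) :
    ∃ y : X, ‖y‖ ≤ 1 ∧ 1 - ε < φ y ∧ 2 - ε < ‖x + y‖ := by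
  have hT : ‖ContinuousLinearMap.id ℝ X + φ.smulRight x‖ = 2 := by
    rw [hX φ x, ContinuousLinearMap.norm_smulRight_apply, hφ, hx]; norm_num
  have h2 : (2 : ℝ) - ε / 2 < ‖ContinuousLinearMap.id ℝ X + φ.smulRight x‖ := by
    rw [hT]; linarith
  obtain ⟨z, hz1, hz2⟩ := (ContinuousLinearMap.id ℝ X + φ.smulRight x).exists_lt_apply_of_lt_opNorm h2
  have hz1' : ‖z‖ ≤ 1 := le_of_lt hz1
  have happ : (ContinuousLinearMap.id ℝ X + φ.smulRight x) z = z + φ z • x := by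
    simp [ContinuousLinearMap.smulRight_apply]
  rw [happ] at hz2
  have hφz : 1 - ε / 2 < |φ z| := by
    have h1 : ‖z + φ z • x‖ ≤ ‖z‖ + |φ z| * ‖x‖ := by
      calc ‖z + φ z • x‖ ≤ ‖z‖ + ‖φ z • x‖ := norm_add_le _ _
        _ = ‖z‖ + |φ z| * ‖x‖ := by rw [norm_smul, Real.norm_eq_abs]
    rw [hx] at h1
    nlinarith
  have hφz1 : |φ z| ≤ 1 := by
    have := φ.le_opNorm z
    rw [hφ, one_mul] at this
    calc |φ z| = ‖φ z‖ := (Real.norm_eq_abs _).symm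
      _ ≤ ‖z‖ := this
      _ ≤ 1 := hz1'
  set y : X := if 0 ≤ φ z then z else -z with hy
  have hyn : ‖y‖ ≤ 1 := by
    rw [hy]; split <;> simpa
  have hφy : φ y = |φ z| := by
    rw [hy]; split
    · rw [abs_of_nonneg ‹_›]
    · rw [map_neg, abs_of_neg (lt_of_not_ge ‹_›)]
  have hkey : 2 - ε / 2 < ‖y + |φ z| • x‖ := by
    rw [hy]; split
    · rw [abs_of_nonneg ‹_›]; exact hz2
    · rw [abs_of_neg (lt_of_not_ge ‹_›)]
      have hneg : -z + -φ z • x = -(z + φ z • x) := by rw [neg_smul]; abel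
      rw [hneg, norm_neg]; exact hz2
  refine ⟨y, hyn, by rw [hφy]; linarith, ?_⟩
  have hdiff : ‖x - |φ z| • x‖ = 1 - |φ z| := by
    have : x - |φ z| • x = (1 - |φ z|) • x := by rw [sub_smul, one_smul]
    rw [this, norm_smul, Real.norm_eq_abs, abs_of_nonneg (by linarith), hx, mul_one]
  have : ‖y + |φ z| • x‖ ≤ ‖x + y‖ + ‖x - |φ z| • x‖ := by
    have he : y + |φ z| • x = (x + y) - (x - |φ z| • x) := by abel
    rw [he]; exact norm_sub_le _ _
  rw [hdiff] at this
  linarith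

set_option maxHeartbeats 2000000 in
theorem dp_finite_rank_aux (hX : DaugavetProperty X) (T : X →L[ℝ] X)
    (hT : FiniteDimensional ℝ (LinearMap.range (T : X →ₗ[ℝ] X)))
    {ε : ℝ} (hε : 0 < ε) (hεr : ε ≤ ‖T‖ / 2) :
    1 + ‖T‖ - ε ≤ ‖ContinuousLinearMap.id ℝ X + T‖ := by
  classical
  have hr0 : 0 < ‖T‖ := by linarith
  set r := ‖T‖ with hrdef
  -- finite-dimensional setup
  set Y := LinearMap.range (T : X →ₗ[ℝ] X) with hY
  haveI : FiniteDimensional ℝ Y := hT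
  set n := Module.finrank ℝ Y with hn
  obtain ⟨li⟩ : Nonempty (Y ≃ₗ[ℝ] EuclideanSpace ℝ (Fin n)) :=
    FiniteDimensional.nonempty_linearEquiv_of_finrank_eq (by rw [finrank_euclideanSpace_fin])
  set e := li.toContinuousLinearEquiv with he
  set Fc : X →L[ℝ] Y := T.codRestrict Y (fun x => LinearMap.mem_range_self _ x) with hFc
  set Fm : X →L[ℝ] EuclideanSpace ℝ (Fin n) :=
    (e : Y →L[ℝ] EuclideanSpace ℝ (Fin n)) ∘L Fc with hFm
  set j : EuclideanSpace ℝ (Fin n) →L[ℝ] X :=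
    Y.subtypeL ∘L (e.symm : EuclideanSpace ℝ (Fin n) →L[ℝ] Y) with hj
  have hjF : ∀ x : X, j (Fm x) = T x := by
    intro x; simp [hj, hFm, hFc]
  -- image of the unit ball and support function
  set ImB : Set (EuclideanSpace ℝ (Fin n)) := Fm '' closedBall 0 1 with hImB
  set m : EuclideanSpace ℝ (Fin n) → ℝ :=
    fun u => sSup ((fun w => (inner ℝ u w : ℝ)) '' ImB) with hm
  have hIm0 : (0 : EuclideanSpace ℝ (Fin n)) ∈ ImB := ⟨0, by simp, by simp⟩
  have hne : ∀ u, ((fun w => (inner ℝ u w : ℝ)) '' ImB).Nonempty :=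
    fun u => ⟨inner ℝ u 0, ⟨0, hIm0, rfl⟩⟩
  have hImnorm : ∀ w ∈ ImB, ‖w‖ ≤ ‖Fm‖ := by
    rintro w ⟨x, hx, rfl⟩
    exact Fm.unit_le_opNorm x (mem_closedBall_zero_iff.mp hx)
  have hbdd : ∀ u, BddAbove ((fun w => (inner ℝ u w : ℝ)) '' ImB) := by
    intro u
    refine ⟨‖u‖ * ‖Fm‖, ?_⟩
    rintro s ⟨w, hw, rfl⟩
    calc (inner ℝ u w : ℝ) ≤ ‖u‖ * ‖w‖ := real_inner_le_norm u w
      _ ≤ ‖u‖ * ‖Fm‖ := mul_le_mul_of_nonneg_left (hImnorm w hw) (norm_nonneg u)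
  have hle : ∀ u, ∀ w ∈ ImB, (inner ℝ u w : ℝ) ≤ m u := by
    intro u w hw
    exact le_csSup (hbdd u) ⟨w, hw, rfl⟩
  have hLip1 : ∀ u v, m u ≤ m v + ‖Fm‖ * ‖u - v‖ := by
    intro u v
    apply csSup_le (hne u)
    rintro s ⟨w, hw, rfl⟩
    have h1 : (inner ℝ u w : ℝ) = inner ℝ v w + inner ℝ (u - v) w := by
      rw [inner_sub_left]; ring
    have h2 : (inner ℝ (u - v) w : ℝ) ≤ ‖u - v‖ * ‖Fm‖ :=
      le_trans (real_inner_le_norm _ _)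
        (mul_le_mul_of_nonneg_left (hImnorm w hw) (norm_nonneg _))
    have h3 : (inner ℝ v w : ℝ) ≤ m v := hle v w hw
    show (inner ℝ u w : ℝ) ≤ m v + ‖Fm‖ * ‖u - v‖
    rw [h1, mul_comm] at *
    linarith
  have hLip : LipschitzWith (Real.toNNReal ‖Fm‖) m := by
    apply LipschitzWith.of_dist_le_mul
    intro u v
    rw [Real.dist_eq, Real.coe_toNNReal _ (norm_nonneg _), dist_eq_norm]
    apply abs_le.mpr
    constructor
    · have h := hLip1 v u
      rw [norm_sub_rev v u] at h
      linarith
    · have h := hLip1 u v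
      linarith
  -- the norming functional and point
  set R := ‖Fm‖ with hR
  have hR0 : 0 ≤ R := norm_nonneg _
  obtain ⟨x₁, hx₁, hTx₁⟩ := T.exists_lt_apply_of_lt_opNorm (show r - ε/8 < ‖T‖ by linarith)
  set k₁ := T x₁ with hk₁def
  have hk₁norm : r - ε/8 < ‖k₁‖ := hTx₁
  have hk₁0 : k₁ ≠ 0 := by
    intro h
    rw [h, norm_zero] at hk₁norm
    linarith
  obtain ⟨ψ, hψ1, hψk₁⟩ := exists_dual_vector ℝ k₁ (norm_ne_zero_iff.mpr hk₁0)
  -- the point u₀ representing ψ ∘ j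
  set u₀ := (InnerProductSpace.toDual ℝ (EuclideanSpace ℝ (Fin n))).symm (ψ ∘L j) with hu₀
  have hu₀app : ∀ w, (inner ℝ u₀ w : ℝ) = ψ (j w) := by
    intro w
    rw [hu₀, InnerProductSpace.toDual_symm_apply]
    rfl
  set η := ε / (16 * (R + 1)) with hη
  have hη0 : 0 < η := by positivity
  have hηR : η * R ≤ ε / 16 := by
    have e1 : η * (R + 1) = ε / 16 := by
      rw [hη]; field_simp
    nlinarith
  -- a differentiability point of m near u₀
  have hae : ∀ᵐ u ∂(volume : Measure (EuclideanSpace ℝ (Fin n))), DifferentiableAt ℝ m u :=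
    hLip.ae_differentiableAt
  have hball : ∃ u ∈ ball u₀ η, DifferentiableAt ℝ m u := by
    by_contra h
    push_neg at h
    have hsub : ball u₀ η ⊆ {u | ¬ DifferentiableAt ℝ m u} := fun u hu => h u hu
    have h0 : (volume : Measure (EuclideanSpace ℝ (Fin n))) (ball u₀ η) = 0 :=
      measure_mono_null hsub (ae_iff.mp hae)
    exact absurd h0 (measure_ball_pos _ _ hη0).ne'
  obtain ⟨u, huball, hdiffu⟩ := hball
  have huu₀ : ‖u - u₀‖ < η := by
    rw [← dist_eq_norm]; exact mem_ball.mp huball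
  set L := fderiv ℝ m u with hL
  -- Step 1 : slice points nearly maximize every functional against the derivative
  have hstep1 : ∀ v : EuclideanSpace ℝ (Fin n), ∀ δ' : ℝ, 0 < δ' →
      ∃ α, 0 < α ∧ ∀ w ∈ ImB, m u - α < inner ℝ u w → (inner ℝ v w : ℝ) ≤ L v + δ' := by
    intro v δ' hδ'
    rcases eq_or_ne v 0 with rfl | hv
    · refine ⟨1, one_pos, fun w hw _ => ?_⟩
      simp [inner_zero_left]
      positivity
    · have hvn : 0 < ‖v‖ := norm_pos_iff.mpr hv
      have hder := hdiffu.hasFDerivAt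
      have hlo := hasFDerivAt_iff_isLittleO_nhds_zero.mp hder
      have hc : 0 < δ' / (2 * ‖v‖) := by positivity
      have hev := hlo.def hc
      rw [Metric.eventually_nhds_iff] at hev
      obtain ⟨ρ, hρ, hballρ⟩ := hev
      set s := ρ / (2 * ‖v‖) with hs
      have hs0 : 0 < s := by positivity
      have hsv : ‖s • v‖ = ρ / 2 := by
        rw [norm_smul, Real.norm_eq_abs, abs_of_pos hs0, hs]
        field_simp
      have hd : dist (s • v) 0 < ρ := by
        rw [dist_zero_right, hsv]; linarith
      have hkey := hballρ hd
      rw [hsv] at hkey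
      have hkey' : |m (u + s • v) - m u - L (s • v)| ≤ s * δ' / 2 := by
        rw [← Real.norm_eq_abs]
        calc ‖m (u + s • v) - m u - L (s • v)‖ ≤ δ' / (2 * ‖v‖) * (ρ / 2) := hkey
          _ = s * δ' / 2 := by rw [hs]; field_simp
      refine ⟨s * δ' / 2, by positivity, ?_⟩
      intro w hw hslice
      have h1 : (inner ℝ (u + s • v) w : ℝ) ≤ m (u + s • v) := hle _ w hw
      have h2 : (inner ℝ (u + s • v) w : ℝ) = inner ℝ u w + s * inner ℝ v w := by
        rw [inner_add_left, real_inner_smul_left]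
      have h3 : L (s • v) = s * L v := by
        rw [L.map_smul]; rfl
      have h4 : m (u + s • v) ≤ m u + s * L v + s * δ' / 2 := by
        have := abs_le.mp hkey'
        rw [h3] at this
        linarith [this.2]
      rw [h2] at h1
      have hexp : s * (L v + δ') = s * L v + s * δ' := by ring
      have h5 : s * (inner ℝ v w : ℝ) ≤ s * (L v + δ') := by
        rw [hexp]; linarith
      exact (mul_le_mul_iff_right₀ hs0).mp h5
  -- Step 2 : small-diameter slice via a finite net
  set δE := (ε / 8) / (‖j‖ + 1) with hδE
  have hδE0 : 0 < δE := by positivity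
  set δnet := δE / (8 * (R + 1)) with hδnet
  have hδnet0 : 0 < δnet := by positivity
  have hδnetR : δnet * (2 * R) ≤ δE / 4 := by
    have e1 : δnet * (8 * (R + 1)) = δE := by
      rw [hδnet]; field_simp
    nlinarith
  obtain ⟨t, htfin, htcover⟩ :=
    totallyBounded_iff.mp
      (isCompact_closedBall (0 : EuclideanSpace ℝ (Fin n)) 1).totallyBounded δnet hδnet0
  choose A hA0 hAprop using fun v : EuclideanSpace ℝ (Fin n) => hstep1 v (δE / 4) (by positivity)
  set t' := htfin.toFinset with ht'
  have ht'ne : t'.Nonempty := by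
    have h0 : (0 : EuclideanSpace ℝ (Fin n)) ∈ closedBall (0 : EuclideanSpace ℝ (Fin n)) 1 :=
      mem_closedBall_self zero_le_one
    obtain ⟨y, hyt, -⟩ := Set.mem_iUnion₂.mp (htcover h0)
    exact ⟨y, htfin.mem_toFinset.mpr hyt⟩
  set t'' := t' ∪ t'.image (fun y => -y) with ht''
  have ht''ne : t''.Nonempty := ht'ne.mono Finset.subset_union_left
  set α₀ := t''.inf' ht''ne A with hα₀
  have hα₀0 : 0 < α₀ := by
    rw [hα₀, Finset.lt_inf'_iff]
    exact fun y _ => hA0 y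
  set α := min α₀ (ε / 8) with hα
  have hα0 : 0 < α := lt_min hα₀0 (by positivity)
  have hαA : ∀ y ∈ t'', α ≤ A y := fun y hy =>
    le_trans (min_le_left _ _) (Finset.inf'_le A hy)
  have hmemt'' : ∀ y ∈ t', y ∈ t'' ∧ -y ∈ t'' := by
    intro y hy
    constructor
    · exact Finset.mem_union_left _ hy
    · exact Finset.mem_union_right _ (Finset.mem_image_of_mem _ hy)
  have hshrink : ∀ w ∈ ImB, m u - α < inner ℝ u w →
      ∀ w' ∈ ImB, m u - α < inner ℝ u w' → ‖w - w'‖ ≤ δE := by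
    intro w hw hsw w' hw' hsw'
    rcases eq_or_ne w w' with rfl | hne'
    · simpa using hδE0.le
    have hkey : ∀ v : EuclideanSpace ℝ (Fin n), ‖v‖ ≤ 1 →
        (inner ℝ v (w - w') : ℝ) ≤ 3 * δE / 4 := by
      intro v hv
      obtain ⟨y, hyt, hyv⟩ := Set.mem_iUnion₂.mp (htcover (mem_closedBall_zero_iff.mpr hv))
      have hyt' : y ∈ t' := htfin.mem_toFinset.mpr hyt
      obtain ⟨hy1, hy2⟩ := hmemt'' y hyt'
      have hup : (inner ℝ y w : ℝ) ≤ L y + δE / 4 :=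
        hAprop y w hw (by linarith [hαA y hy1])
      have hlo' : (inner ℝ (-y) w' : ℝ) ≤ L (-y) + δE / 4 :=
        hAprop (-y) w' hw' (by linarith [hαA (-y) hy2])
      have hlo : L y - δE / 4 ≤ (inner ℝ y w' : ℝ) := by
        rw [inner_neg_left, map_neg] at hlo'
        linarith
      have hvy : ‖v - y‖ < δnet := by
        rw [← dist_eq_norm]; exact mem_ball.mp hyv
      have hww' : ‖w - w'‖ ≤ 2 * R := by
        calc ‖w - w'‖ ≤ ‖w‖ + ‖w'‖ := norm_sub_le _ _
          _ ≤ 2 * R := by linarith [hImnorm w hw, hImnorm w' hw']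
      have hcross : (inner ℝ (v - y) (w - w') : ℝ) ≤ δE / 4 := by
        calc (inner ℝ (v - y) (w - w') : ℝ) ≤ ‖v - y‖ * ‖w - w'‖ := real_inner_le_norm _ _
          _ ≤ δnet * (2 * R) := by
              apply mul_le_mul hvy.le hww' (norm_nonneg _) hδnet0.le
          _ ≤ δE / 4 := hδnetR
      have hsplit : (inner ℝ v (w - w') : ℝ)
          = inner ℝ y w - inner ℝ y w' + inner ℝ (v - y) (w - w') := by
        simp only [inner_sub_left, inner_sub_right]
        ring
      rw [hsplit]
      linarith
    have hd0 : 0 < ‖w - w'‖ := norm_pos_iff.mpr (sub_ne_zero.mpr hne')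
    have hunit : ‖(‖w - w'‖⁻¹ • (w - w'))‖ ≤ 1 := by
      rw [norm_smul, Real.norm_eq_abs, abs_of_pos (inv_pos.mpr hd0), inv_mul_cancel₀ hd0.ne']
    have hval := hkey _ hunit
    rw [real_inner_smul_left, real_inner_self_eq_norm_sq] at hval
    have hval' : ‖w - w'‖ ≤ 3 * δE / 4 := by
      have h2 : ‖w - w'‖⁻¹ * ‖w - w'‖ ^ 2 = ‖w - w'‖ := by
        field_simp
      rwa [h2] at hval
    linarith
  -- norms of slice elements are almost maximal
  have habs : ∀ (a : EuclideanSpace ℝ (Fin n)), ∀ w ∈ ImB, |(inner ℝ a w : ℝ)| ≤ ‖a‖ * R := by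
    intro a w hw
    calc |(inner ℝ a w : ℝ)| ≤ ‖a‖ * ‖w‖ := abs_real_inner_le_norm a w
      _ ≤ ‖a‖ * R := mul_le_mul_of_nonneg_left (hImnorm w hw) (norm_nonneg a)
  have hdiffbd : ∀ w ∈ ImB, |(inner ℝ (u₀ - u) w : ℝ)| ≤ η * R := by
    intro w hw
    calc |(inner ℝ (u₀ - u) w : ℝ)| ≤ ‖u₀ - u‖ * R := habs _ w hw
      _ ≤ η * R := by
          apply mul_le_mul_of_nonneg_right _ hR0
          rw [norm_sub_rev]
          exact huu₀.le
  have hsplit₀ : ∀ w : EuclideanSpace ℝ (Fin n),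
      (inner ℝ u₀ w : ℝ) = inner ℝ u w + inner ℝ (u₀ - u) w := by
    intro w
    rw [inner_sub_left]; ring
  have hx₁ball : x₁ ∈ closedBall (0 : X) 1 := mem_closedBall_zero_iff.mpr hx₁.le
  have hFmx₁ : Fm x₁ ∈ ImB := ⟨x₁, hx₁ball, rfl⟩
  have hu₀x₁ : (inner ℝ u₀ (Fm x₁) : ℝ) = ‖k₁‖ := by
    rw [hu₀app, hjF]
    exact hψk₁
  have hmu_lb : ‖k₁‖ - η * R ≤ m u := by
    have h1 := hle u (Fm x₁) hFmx₁
    have h2 := hsplit₀ (Fm x₁)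
    have h3 := (abs_le.mp (hdiffbd (Fm x₁) hFmx₁)).2
    rw [hu₀x₁] at h2
    linarith
  have hαε : α ≤ ε / 8 := min_le_right _ _
  have hslice_norm : ∀ w ∈ ImB, m u - α < inner ℝ u w → r - 3 * ε / 8 < ψ (j w) := by
    intro w hw hsw
    have h1 : (inner ℝ u₀ w : ℝ) = ψ (j w) := hu₀app w
    have h2 := hsplit₀ w
    have h3 := (abs_le.mp (hdiffbd w hw)).1
    have : m u - α - η * R < ψ (j w) := by
      rw [← h1, h2]
      linarith
    have hk₁' : r - ε / 8 < ‖k₁‖ := hk₁norm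
    linarith [hηR]
  have hjw_norm : ∀ w : EuclideanSpace ℝ (Fin n), ψ (j w) ≤ ‖j w‖ := by
    intro w
    have h := ψ.le_opNorm (j w)
    rw [hψ1, one_mul, Real.norm_eq_abs] at h
    exact le_trans (le_abs_self _) h
  have hmdef : ∀ a, m a = sSup ((fun w => (inner ℝ a w : ℝ)) '' ImB) := fun a => by rw [hm]
  -- pick the slice center w₀
  obtain ⟨sv, hsvmem, hs₀⟩ := exists_lt_of_lt_csSup (hne u)
    (show m u - α < sSup ((fun w => (inner ℝ u w : ℝ)) '' ImB) by
      rw [← hmdef]; linarith)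
  obtain ⟨w₀, hw₀ImB, rfl⟩ := hsvmem
  have hs₀' : m u - α < (inner ℝ u w₀ : ℝ) := hs₀
  set k₀ := j w₀ with hk₀def
  obtain ⟨xb, hxbball, hw₀eq⟩ := hw₀ImB
  have hw₀ImB' : w₀ ∈ ImB := ⟨xb, hxbball, hw₀eq⟩
  have hk₀T : k₀ = T xb := by rw [hk₀def, ← hw₀eq, hjF]
  have hxb1 : ‖xb‖ ≤ 1 := mem_closedBall_zero_iff.mp hxbball
  have hk₀up : ‖k₀‖ ≤ r := by
    rw [hk₀T]
    exact T.unit_le_opNorm xb hxb1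
  have hk₀lb : r - 3 * ε / 8 < ‖k₀‖ :=
    lt_of_lt_of_le (hslice_norm w₀ hw₀ImB' hs₀') (hjw_norm w₀)
  have hk₀pos : 0 < ‖k₀‖ := by linarith
  -- the slice functional on X
  set Φ : X →L[ℝ] ℝ := (innerSL ℝ u).comp Fm with hΦ
  have hΦapp : ∀ x : X, Φ x = (inner ℝ u (Fm x) : ℝ) := by
    intro x
    simp [hΦ]
  have hux₁ : ‖k₁‖ - η * R ≤ (inner ℝ u (Fm x₁) : ℝ) := by
    have h2 := hsplit₀ (Fm x₁)
    have h3 := (abs_le.mp (hdiffbd (Fm x₁) hFmx₁)).2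
    rw [hu₀x₁] at h2
    linarith
  have hΦx₁pos : 0 < Φ x₁ := by
    rw [hΦapp]
    have : ε / 8 + η * R < r := by linarith [hηR]
    linarith
  set N := ‖Φ‖ with hNdef
  have hN0 : 0 < N := by
    have h1 : |Φ x₁| ≤ N := by
      have := Φ.unit_le_opNorm x₁ hx₁.le
      rwa [Real.norm_eq_abs] at this
    calc (0 : ℝ) < Φ x₁ := hΦx₁pos
      _ ≤ |Φ x₁| := le_abs_self _
      _ ≤ N := h1
  have hmuN : m u ≤ N := by
    rw [hmdef]
    apply csSup_le (hne u)
    rintro sv ⟨w, ⟨x, hxball, rfl⟩, rfl⟩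
    have h1 : (inner ℝ u (Fm x) : ℝ) = Φ x := (hΦapp x).symm
    have h2 : |Φ x| ≤ N := by
      have := Φ.unit_le_opNorm x (mem_closedBall_zero_iff.mp hxball)
      rwa [Real.norm_eq_abs] at this
    calc (inner ℝ u (Fm x) : ℝ) = Φ x := h1
      _ ≤ |Φ x| := le_abs_self _
      _ ≤ N := h2
  set φ : X →L[ℝ] ℝ := N⁻¹ • Φ with hφdef
  have hφ1 : ‖φ‖ = 1 := by
    rw [hφdef]
    have := norm_smul (α := ℝ) N⁻¹ Φ
    rw [this, Real.norm_eq_abs, abs_of_pos (inv_pos.mpr hN0), ← hNdef,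
      inv_mul_cancel₀ hN0.ne']
  set εs := min (1 - (m u - α) / N) (ε / (2 * (1 + r))) with hεsdef
  have hεs0 : 0 < εs := by
    apply lt_min
    · have h1 : (m u - α) / N < 1 := (div_lt_one hN0).mpr (by linarith)
      linarith
    · positivity
  set xh := ‖k₀‖⁻¹ • k₀ with hxhdef
  have hxh1 : ‖xh‖ = 1 := by
    rw [hxhdef, norm_smul, Real.norm_eq_abs, abs_of_pos (inv_pos.mpr hk₀pos),
      inv_mul_cancel₀ hk₀pos.ne']
  obtain ⟨y, hy1, hy2, hy3⟩ := dp_slice hX φ hφ1 xh hxh1 hεs0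
  -- the point y lies in the slice
  have hφy : φ y = N⁻¹ * Φ y := by rw [hφdef]; rfl
  have hΦy : m u - α < Φ y := by
    have h1 : (m u - α) / N ≤ 1 - εs := by
      have := min_le_left (1 - (m u - α) / N) (ε / (2 * (1 + r)))
      linarith
    have h2 : (m u - α) / N < N⁻¹ * Φ y := lt_of_le_of_lt h1 (by rw [← hφy]; exact hy2)
    have h3 := (mul_lt_mul_iff_right₀ hN0).mpr h2
    rwa [mul_div_cancel₀ _ hN0.ne', mul_inv_cancel_left₀ hN0.ne'] at h3
  have hw'mem : Fm y ∈ ImB := ⟨y, mem_closedBall_zero_iff.mpr hy1, rfl⟩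
  have hw'slice : m u - α < (inner ℝ u (Fm y) : ℝ) := by rw [← hΦapp]; exact hΦy
  have hdiam := hshrink w₀ hw₀ImB' hs₀' (Fm y) hw'mem hw'slice
  have hTyk₀ : ‖T y - k₀‖ ≤ ε / 8 := by
    have h1 : T y - k₀ = j (Fm y - w₀) := by
      rw [map_sub, hjF, hk₀def]
    rw [h1]
    have h2 : ‖Fm y - w₀‖ ≤ δE := by rw [norm_sub_rev]; exact hdiam
    calc ‖j (Fm y - w₀)‖ ≤ ‖j‖ * ‖Fm y - w₀‖ := j.le_opNorm _
      _ ≤ ‖j‖ * δE := mul_le_mul_of_nonneg_left h2 (norm_nonneg j)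
      _ ≤ ε / 8 := by
          rw [hδE]
          have h3 : ‖j‖ * (ε / 8 / (‖j‖ + 1)) = ε / 8 * (‖j‖ / (‖j‖ + 1)) := by ring
          rw [h3]
          apply mul_le_of_le_one_right (by positivity)
          apply div_le_one_of_le₀ (by linarith) (by positivity)
  -- lower bound on ‖y + k₀‖
  have hyk₀ : 1 + ‖k₀‖ - (1 + r) * εs ≤ ‖y + k₀‖ := by
    have hεsr : εs ≤ (1 + r) * εs := by
      have h0 : 0 ≤ r * εs := mul_nonneg (by linarith) hεs0.le
      have hexp : (1 + r) * εs = εs + r * εs := by ring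
      linarith
    rcases le_or_gt ‖k₀‖ 1 with hc | hc
    · have h1 : ‖xh - k₀‖ = 1 - ‖k₀‖ := by
        have h2 : xh - k₀ = (‖k₀‖⁻¹ - 1) • k₀ := by
          rw [sub_smul, one_smul, hxhdef]
        have h3 : (0 : ℝ) ≤ ‖k₀‖⁻¹ - 1 := by
          have h3' : (1 : ℝ) ≤ ‖k₀‖⁻¹ := (one_le_inv₀ hk₀pos).mpr hc
          linarith
        rw [h2, norm_smul, Real.norm_eq_abs, abs_of_nonneg h3]
        field_simp
      have h4 : ‖xh + y‖ ≤ ‖y + k₀‖ + ‖xh - k₀‖ := by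
        have h5 : xh + y = (y + k₀) + (xh - k₀) := by abel
        rw [h5]; exact norm_add_le _ _
      rw [h1] at h4
      linarith
    · have hdec : y + k₀ = ‖k₀‖ • (xh + y) - (‖k₀‖ - 1) • y := by
        rw [smul_add]
        have h5 : ‖k₀‖ • xh = k₀ := by
          rw [hxhdef, smul_smul, mul_inv_cancel₀ hk₀pos.ne', one_smul]
        rw [h5, sub_smul, one_smul]
        abel
      have h6 : ‖‖k₀‖ • (xh + y)‖ = ‖k₀‖ * ‖xh + y‖ := by
        rw [norm_smul, Real.norm_eq_abs, abs_of_pos hk₀pos]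
      have h7 : ‖(‖k₀‖ - 1) • y‖ ≤ ‖k₀‖ - 1 := by
        rw [norm_smul, Real.norm_eq_abs, abs_of_pos (by linarith)]
        exact mul_le_of_le_one_right (by linarith) hy1
      have h8 : ‖k₀‖ * ‖xh + y‖ - ‖(‖k₀‖ - 1) • y‖ ≤ ‖y + k₀‖ := by
        rw [hdec]
        have := norm_sub_norm_le (‖k₀‖ • (xh + y)) ((‖k₀‖ - 1) • y)
        rw [h6] at this
        linarith [norm_sub_le (‖k₀‖ • (xh + y)) ((‖k₀‖ - 1) • y)]
      have h9 : ‖k₀‖ * (2 - εs) ≤ ‖k₀‖ * ‖xh + y‖ :=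
        mul_le_mul_of_nonneg_left hy3.le hk₀pos.le
      have h10 : ‖k₀‖ * εs ≤ (1 + r) * εs :=
        mul_le_mul_of_nonneg_right (by linarith) hεs0.le
      have hexp : ‖k₀‖ * (2 - εs) = 2 * ‖k₀‖ - ‖k₀‖ * εs := by ring
      linarith
  have hεs2 : (1 + r) * εs ≤ ε / 2 := by
    have h1 : εs ≤ ε / (2 * (1 + r)) := min_le_right _ _
    have h2 : (1 + r) * (ε / (2 * (1 + r))) = ε / 2 := by
      field_simp
    calc (1 + r) * εs ≤ (1 + r) * (ε / (2 * (1 + r))) :=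
          mul_le_mul_of_nonneg_left h1 (by linarith)
      _ = ε / 2 := h2
  have hfin : 1 + r - ε ≤ ‖y + T y‖ := by
    have h1 : ‖y + k₀‖ ≤ ‖y + T y‖ + ‖T y - k₀‖ := by
      have h2 : y + k₀ = (y + T y) - (T y - k₀) := by abel
      rw [h2]; exact norm_sub_le _ _
    linarith
  calc 1 + r - ε ≤ ‖y + T y‖ := hfin
    _ = ‖(ContinuousLinearMap.id ℝ X + T) y‖ := by simp
    _ ≤ ‖ContinuousLinearMap.id ℝ X + T‖ := (ContinuousLinearMap.id ℝ X + T).unit_le_opNorm y hy1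

theorem dp_finite_rank (hX : DaugavetProperty X) (T : X →L[ℝ] X)
    (hT : FiniteDimensional ℝ (LinearMap.range (T : X →ₗ[ℝ] X))) {ε : ℝ} (hε : 0 < ε) :
    1 + ‖T‖ - ε ≤ ‖ContinuousLinearMap.id ℝ X + T‖ := by
  by_cases h0 : T = 0
  · subst h0
    rw [add_zero, norm_zero, dp_norm_id hX]
    linarith
  · have hr0 : 0 < ‖T‖ := norm_pos_iff.mpr h0
    have hε'0 : 0 < min ε (‖T‖ / 2) := lt_min hε (by linarith)
    have h := dp_finite_rank_aux hX T hT hε'0 (min_le_right _ _)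
    have hle : min ε (‖T‖ / 2) ≤ ε := min_le_left _ _
    linarith

end Aux

/-- if `X(μ)` is a(n order continuous) Banach function space with the Daugavet
property, then the identity map on `X(μ)` — the integration map of the vector measure
`A ↦ χ_A` — cannot be written as a (possibly uncountable) pointwise unconditionally
convergent series of finite rank operators. (Stated for an arbitrary Banach space `X` with
the Daugavet property, of which the order continuous Banach function space situation is a
particular instance.) -/
theorem stmt18 (X : Type*) [NormedAddCommGroup X] [NormedSpace ℝ X] [CompleteSpace X]
    (hX : DaugavetProperty X) :
    ¬ ∃ (Γ : Type) (T : Γ → (X →L[ℝ] X)),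
        (∀ n : Γ, FiniteDimensional ℝ (LinearMap.range ((T n) : X →ₗ[ℝ] X))) ∧
        ∀ x : X, HasSum (fun n : Γ => T n x) x := by
  classical
  rintro ⟨Γ, T, hfin, hsum⟩
  set S : Finset Γ → (X →L[ℝ] X) := fun F => ∑ n ∈ F, T n with hS
  have hSapp : ∀ (F : Finset Γ) (x : X), S F x = ∑ n ∈ F, T n x := by
    intro F x; simp [hS]
  -- pointwise boundedness
  have hpt : ∀ x : X, ∃ C : ℝ, ∀ F : Finset Γ, ‖S F x‖ ≤ C := by
    intro x
    have hev : ∀ᶠ F in Filter.atTop, dist (∑ n ∈ F, T n x) x < 1 :=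
      (hsum x).eventually (Metric.eventually_nhds_iff.mpr ⟨1, one_pos, fun y hy => hy⟩)
    obtain ⟨F₀, hF₀⟩ := Filter.eventually_atTop.mp hev
    have hne : (F₀.powerset).Nonempty := ⟨∅, by simp⟩
    set B : ℝ := F₀.powerset.sup' hne (fun s => ‖∑ n ∈ s, T n x‖) with hB
    refine ⟨1 + ‖x‖ + B, fun F => ?_⟩
    have hsub : (F ∪ F₀) \ F ⊆ F₀ := by
      intro a ha
      rcases Finset.mem_sdiff.mp ha with ⟨h1, h2⟩
      rcases Finset.mem_union.mp h1 with h | h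
      · exact absurd h h2
      · exact h
    have hsplit : ∑ n ∈ F, T n x = (∑ n ∈ F ∪ F₀, T n x) - ∑ n ∈ (F ∪ F₀) \ F, T n x := by
      rw [Finset.sum_sdiff_eq_sub Finset.subset_union_left]
      abel
    rw [hSapp, hsplit]
    have h1 : ‖∑ n ∈ F ∪ F₀, T n x‖ ≤ 1 + ‖x‖ := by
      have hd := hF₀ (F ∪ F₀) Finset.subset_union_right
      rw [dist_eq_norm] at hd
      have := norm_add_le ((∑ n ∈ F ∪ F₀, T n x) - x) x
      simp only [sub_add_cancel] at this
      linarith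
    have h2 : ‖∑ n ∈ (F ∪ F₀) \ F, T n x‖ ≤ B := by
      rw [hB]
      exact Finset.le_sup' (f := fun s => ‖∑ n ∈ s, T n x‖) (Finset.mem_powerset.mpr hsub)
    calc ‖(∑ n ∈ F ∪ F₀, T n x) - ∑ n ∈ (F ∪ F₀) \ F, T n x‖
        ≤ ‖∑ n ∈ F ∪ F₀, T n x‖ + ‖∑ n ∈ (F ∪ F₀) \ F, T n x‖ := norm_sub_le _ _
      _ ≤ 1 + ‖x‖ + B := by linarith
  obtain ⟨C', hC'⟩ := banach_steinhaus hpt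
  set M : ℝ := sSup (Set.range fun F => ‖S F‖) with hM
  have hbdd : BddAbove (Set.range fun F => ‖S F‖) := ⟨C', by rintro r ⟨F, rfl⟩; exact hC' F⟩
  have hMle : ∀ F, ‖S F‖ ≤ M := fun F => le_csSup hbdd ⟨F, rfl⟩
  have hM0 : (0 : ℝ) ≤ M := le_trans (norm_nonneg _) (hMle ∅)
  obtain ⟨r, ⟨F, rfl⟩, hrM⟩ :=
    exists_lt_of_lt_csSup (Set.range_nonempty _) (show M - 8⁻¹ < M by linarith)
  simp only at hrM
  set A : X →L[ℝ] X := (-2 : ℝ) • S F with hA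
  have hnormA : ‖A‖ = 2 * ‖S F‖ := by
    have := norm_smul (α := ℝ) (-2 : ℝ) (S F)
    rw [hA, this]; norm_num
  -- upper bound on ‖Id + A‖
  have hup : ‖ContinuousLinearMap.id ℝ X + A‖ ≤ 2 * M := by
    apply ContinuousLinearMap.opNorm_le_bound _ (by linarith)
    intro x
    apply le_of_forall_pos_le_add
    intro ε hε
    have hev : ∀ᶠ G in Filter.atTop, dist (∑ n ∈ G, T n x) x < ε :=
      (hsum x).eventually (Metric.eventually_nhds_iff.mpr ⟨ε, hε, fun y hy => hy⟩)
    obtain ⟨G₀, hG₀⟩ := Filter.eventually_atTop.mp hev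
    set G := F ∪ G₀ with hG
    have hFG : F ⊆ G := Finset.subset_union_left
    have hGx : ‖(∑ n ∈ G, T n x) - x‖ < ε := by
      have := hG₀ G Finset.subset_union_right
      rwa [dist_eq_norm] at this
    have happ : (ContinuousLinearMap.id ℝ X + A) x
        = (x - (∑ n ∈ G, T n x)) + ((∑ n ∈ G, T n x) - S F x) - S F x := by
      have e1 : (ContinuousLinearMap.id ℝ X + A) x = x + (-2 : ℝ) • (S F x) := by
        simp [hA]
      rw [e1]; module
    have hGF : ‖(∑ n ∈ G, T n x) - S F x‖ ≤ M * ‖x‖ := by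
      have e2 : (∑ n ∈ G, T n x) - S F x = S (G \ F) x := by
        rw [hSapp, hSapp, Finset.sum_sdiff_eq_sub hFG]
      rw [e2]
      exact le_trans ((S (G \ F)).le_opNorm x)
        (mul_le_mul_of_nonneg_right (hMle _) (norm_nonneg x))
    have hFx : ‖S F x‖ ≤ M * ‖x‖ :=
      le_trans ((S F).le_opNorm x) (mul_le_mul_of_nonneg_right (hMle _) (norm_nonneg x))
    rw [happ]
    have hx1 : ‖x - (∑ n ∈ G, T n x)‖ < ε := by
      rw [← norm_neg]; simpa using hGx
    calc ‖(x - (∑ n ∈ G, T n x)) + ((∑ n ∈ G, T n x) - S F x) - S F x‖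
        ≤ ‖(x - (∑ n ∈ G, T n x)) + ((∑ n ∈ G, T n x) - S F x)‖ + ‖S F x‖ := norm_sub_le _ _
      _ ≤ ‖x - (∑ n ∈ G, T n x)‖ + ‖(∑ n ∈ G, T n x) - S F x‖ + ‖S F x‖ := by
          have := norm_add_le (x - (∑ n ∈ G, T n x)) ((∑ n ∈ G, T n x) - S F x)
          linarith
      _ ≤ 2 * M * ‖x‖ + ε := by linarith
  -- A has finite rank
  have hfinA : FiniteDimensional ℝ (LinearMap.range (A : X →ₗ[ℝ] X)) := by
    haveI : ∀ n : Γ, FiniteDimensional ℝ ((fun n => LinearMap.range ((T n : X →ₗ[ℝ] X))) n) := hfin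
    haveI : FiniteDimensional ℝ ↥(F.sup fun n => LinearMap.range ((T n : X →ₗ[ℝ] X))) :=
      Submodule.finiteDimensional_finset_sup F _
    apply Submodule.finiteDimensional_of_le
      (S₂ := F.sup fun n => LinearMap.range ((T n : X →ₗ[ℝ] X)))
    rintro _ ⟨x, rfl⟩
    have : (A : X →ₗ[ℝ] X) x = (-2 : ℝ) • ∑ n ∈ F, T n x := by
      simp [hA, hSapp]
    rw [this]
    apply Submodule.smul_mem
    apply Submodule.sum_mem
    intro n hn
    exact Finset.le_sup (f := fun n => LinearMap.range ((T n : X →ₗ[ℝ] X))) hn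
      ⟨x, rfl⟩
  -- contradiction
  have hlow := dp_finite_rank hX A hfinA (ε := 8⁻¹) (by norm_num)
  rw [hnormA] at hlow
  linarith
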